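/- Let 𝔡 be a finite-dimensional Lie algebra and β ∈ S²𝔡 an ad-invariant symmetric 2-tensor. Let 𝔡*_β denote 𝔡* equipped with the bracket defined by ⟨[μ₁, μ₂], ξ⟩ = ⟨μ₂, [ξ, β^♯(μ₁)]⟩ for ξ ∈ 𝔡. Then this bracket is a Lie bracket on 𝔡*, i.e. it is bilinear, antisymmetric, and satisfies the Jacobi identity. -/
import Mathlib


open Module LieAlgebra

/-- Let `𝔡` be a finite-dimensional Lie algebra and `β ∈ S²𝔡` an invariant symmetric
2-tensor, represented by its sharp map `Bs : 𝔡* → 𝔡` (symmetry: `μ(Bs ν) = ν(Bs μ)`;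
invariance: `Bs(μ ∘ ad ξ) = −⁅ξ, Bs μ⁆`, i.e. `β^♯ ∘ ad*_ξ = ad_ξ ∘ β^♯`).
The bracket on `𝔡*` determined by `⟨[μ₁, μ₂], ξ⟩ = ⟨μ₂, [ξ, β^♯(μ₁)]⟩` is a
Lie bracket: bilinear, antisymmetric, and satisfying the Jacobi identity. -/
theorem dual_bracket_is_lie_bracket {K D : Type*} [Field K]
    [LieRing D] [LieAlgebra K D] [FiniteDimensional K D]
    (Bs : Module.Dual K D →ₗ[K] D)
    (hsymm : ∀ μ ν : Module.Dual K D, μ (Bs ν) = ν (Bs μ))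
    (hinv : ∀ (ξ : D) (μ : Module.Dual K D),
      Bs (μ ∘ₗ LieAlgebra.ad K D ξ) = -⁅ξ, Bs μ⁆)
    (br : Module.Dual K D → Module.Dual K D → Module.Dual K D)
    (hbr : ∀ (μ₁ μ₂ : Module.Dual K D) (ξ : D), br μ₁ μ₂ ξ = μ₂ ⁅ξ, Bs μ₁⁆) :
    (∀ (a : K) (μ₁ μ₁' μ₂ : Module.Dual K D),
      br (a • μ₁ + μ₁') μ₂ = a • br μ₁ μ₂ + br μ₁' μ₂) ∧
    (∀ (a : K) (μ₁ μ₂ μ₂' : Module.Dual K D),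
      br μ₁ (a • μ₂ + μ₂') = a • br μ₁ μ₂ + br μ₁ μ₂') ∧
    (∀ μ₁ μ₂ : Module.Dual K D, br μ₁ μ₂ = -br μ₂ μ₁) ∧
    (∀ μ₁ μ₂ μ₃ : Module.Dual K D,
      br μ₁ (br μ₂ μ₃) = br (br μ₁ μ₂) μ₃ + br μ₂ (br μ₁ μ₃)) := by
  have hBsbr : ∀ μ₁ μ₂ : Module.Dual K D, Bs (br μ₁ μ₂) = ⁅Bs μ₁, Bs μ₂⁆ := by
    intro μ₁ μ₂
    have h : br μ₁ μ₂ = -(μ₂ ∘ₗ LieAlgebra.ad K D (Bs μ₁)) := by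
      ext ξ
      rw [hbr]
      simp only [LinearMap.neg_apply, LinearMap.coe_comp, Function.comp_apply,
        LieAlgebra.ad_apply]
      rw [← lie_skew, map_neg]
    rw [h, map_neg, hinv]
    simp
  refine ⟨?_, ?_, ?_, ?_⟩
  · intro a μ₁ μ₁' μ₂
    ext ξ
    simp [hbr]
  · intro a μ₁ μ₂ μ₂'
    ext ξ
    simp [hbr]
  · intro μ₁ μ₂
    ext ξ
    have key : (μ₂ ∘ₗ LieAlgebra.ad K D ξ) (Bs μ₁) = μ₁ (Bs (μ₂ ∘ₗ LieAlgebra.ad K D ξ)) :=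
      hsymm _ _
    simp only [hinv, map_neg] at key
    simpa [hbr] using key
  · intro μ₁ μ₂ μ₃
    ext ξ
    simp only [hbr, LinearMap.add_apply, hBsbr]
    have : ⁅⁅ξ, Bs μ₁⁆, Bs μ₂⁆ = ⁅ξ, ⁅Bs μ₁, Bs μ₂⁆⁆ + ⁅⁅ξ, Bs μ₂⁆, Bs μ₁⁆ := by
      rw [leibniz_lie ξ (Bs μ₁) (Bs μ₂), ← lie_skew (Bs μ₁) ⁅ξ, Bs μ₂⁆]
      abel
    rw [this, map_add]
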